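/- Let f be convex with ‖∇f_i(x)‖² ≤ G² for each sampled gradient, and suppose at each iteration k the step size γ_k satisfies γ_{l,K-1} ≤ γ_k ≤ γ_{b,0}/√(k+1), where γ_{l,K-1} > 0, and the iterates follow deterministic subgradient descent x^{k+1} = x^k - γ_k ∇f(x^k). Then the average iterate x̄_K = (1/K)∑_{k=0}^{K-1} x^k satisfies f(x̄_K) - f(x*) ≤ ‖x⁰ - x*‖²/(2γ_{l,K-1}K) + γ_{b,0}²G²(1 + log K)/(2γ_{l,K-1}K). -/

import Mathlib

open Finset Real RealInnerProductSpace

lemma grad_ineq' {n : ℕ} (f : EuclideanSpace ℝ (Fin n) → ℝ)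
    (f' : EuclideanSpace ℝ (Fin n) → EuclideanSpace ℝ (Fin n))
    (hgrad : ∀ z, HasGradientAt f (f' z) z)
    (hconv : ConvexOn ℝ Set.univ f) (a b : EuclideanSpace ℝ (Fin n)) :
    f a + ⟪f' a, b - a⟫ ≤ f b := by
  set g : ℝ → ℝ := fun t => f (AffineMap.lineMap a b t) with hg
  have hgconv : ConvexOn ℝ Set.univ g := by
    have := hconv.comp_affineMap (AffineMap.lineMap a b)
    simp at this; exact this
  have hcurve : HasDerivAt (fun t : ℝ => AffineMap.lineMap a b t) (b - a) 0 := by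
    have h1 : HasDerivAt (fun t : ℝ => t • (b - a)) ((1:ℝ) • (b - a)) 0 :=
      (hasDerivAt_id 0).smul_const (b - a)
    have h2 : HasDerivAt (fun t : ℝ => t • (b - a) + a) (b - a) 0 := by
      simpa using h1.add_const a
    refine HasDerivAt.congr_of_eventuallyEq h2 ?_
    filter_upwards with t
    simp [AffineMap.lineMap_apply_module]
    module
  have hder : HasDerivAt g ⟪f' a, b - a⟫ 0 := by
    have hf : HasFDerivAt f ((InnerProductSpace.toDual ℝ _) (f' a)) a := by
      have := hgrad a
      rw [hasGradientAt_iff_hasFDerivAt] at this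
      simpa using this
    have hf0 : HasFDerivAt f ((InnerProductSpace.toDual ℝ _) (f' a)) ((AffineMap.lineMap a b) (0:ℝ)) := by
      simpa using hf
    have := hf0.comp_hasDerivAt (x := (0:ℝ)) hcurve
    simp [InnerProductSpace.toDual_apply_apply] at this; exact this
  have hslope := hgconv.le_slope_of_hasDerivAt (Set.mem_univ 0) (Set.mem_univ 1)
    one_pos hder
  have : slope g 0 1 = f b - f a := by simp [slope, g]
  linarith [hslope.trans_eq this]

lemma harmonic_le' (K : ℕ) : ∑ k ∈ Finset.range K, (1:ℝ)/(k+1) ≤ 1 + Real.log K := by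
  induction K with
  | zero => simp
  | succ K ih =>
    rcases Nat.eq_zero_or_pos K with h0 | hpos
    · subst h0; simp
    · have hKpos : (0:ℝ) < K := by exact_mod_cast hpos
      have hl := Real.log_le_sub_one_of_pos (x := (K:ℝ)/(K+1)) (by positivity)
      have hlog : Real.log ((K:ℝ)/(K+1)) = Real.log K - Real.log (K+1) := by
        rw [Real.log_div (by positivity) (by positivity)]
      have hfrac : (K:ℝ)/(K+1) - 1 = -(1/(K+1)) := by field_simp; ring
      rw [Finset.sum_range_succ]
      push_cast
      nlinarith [ih]

set_option maxHeartbeats 1000000 in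
/-- Convergence of subgradient descent with envelope step sizes
γ_{l,K-1} ≤ γ_k ≤ γ_{b,0}/√(k+1) for a convex function with bounded gradients. -/
theorem envelope_step_convex_rate {n : ℕ}
    (f : EuclideanSpace ℝ (Fin n) → ℝ) (f' : EuclideanSpace ℝ (Fin n) → EuclideanSpace ℝ (Fin n))
    (hgrad : ∀ z, HasGradientAt f (f' z) z)
    (hconv : ConvexOn ℝ Set.univ f)
    (G : ℝ) (hG : 0 < G) (hGbound : ∀ z, ‖f' z‖ ≤ G)
    (xstar : EuclideanSpace ℝ (Fin n)) (hmin : ∀ z, f xstar ≤ f z)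
    (γb0 ω : ℝ) (hγb0 : 0 < γb0) (hω : 0 < ω)
    (K : ℕ) (hK : 1 ≤ K)
    (γl : ℝ) (hγl : γl = min ω (γb0 / Real.sqrt K))
    (x : ℕ → EuclideanSpace ℝ (Fin n)) (γ : ℕ → ℝ)
    (hupd : ∀ k, x (k + 1) = x k - γ k • f' (x k))
    (hstep : ∀ k < K, γl ≤ γ k ∧ γ k ≤ γb0 / Real.sqrt (k + 1)) :
    f ((K : ℝ)⁻¹ • ∑ k ∈ Finset.range K, x k) - f xstar ≤
      ‖x 0 - xstar‖ ^ 2 / (2 * γl * K) +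
        γb0 ^ 2 * G ^ 2 * (1 + Real.log K) / (2 * γl * K) := by
  have hKpos : (0:ℝ) < K := by exact_mod_cast hK
  have hγlpos : 0 < γl := by
    rw [hγl]
    exact lt_min hω (div_pos hγb0 (Real.sqrt_pos.2 hKpos))
  have hD : ∀ k, 0 ≤ f (x k) - f xstar := fun k => sub_nonneg.2 (hmin _)
  -- per-step key inequality
  have hkey : ∀ k < K, 2 * γl * (f (x k) - f xstar) ≤
      ‖x k - xstar‖ ^ 2 - ‖x (k+1) - xstar‖ ^ 2 + γb0 ^ 2 * G ^ 2 / (k+1) := by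
    intro k hk
    obtain ⟨hlo, hhi⟩ := hstep k hk
    have hγpos : 0 < γ k := lt_of_lt_of_le hγlpos hlo
    have hexp : ‖x (k+1) - xstar‖ ^ 2 = ‖x k - xstar‖ ^ 2
        - 2 * γ k * ⟪f' (x k), x k - xstar⟫ + γ k ^ 2 * ‖f' (x k)‖ ^ 2 := by
      rw [hupd k]
      have he : x k - γ k • f' (x k) - xstar = (x k - xstar) - γ k • f' (x k) := by abel
      rw [he, norm_sub_sq_real, real_inner_smul_right, norm_smul]
      rw [real_inner_comm]
      simp [Real.norm_eq_abs, mul_pow, sq_abs]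
      ring
    have hgi := grad_ineq' f f' hgrad hconv (x k) xstar
    have hinner : f (x k) - f xstar ≤ ⟪f' (x k), x k - xstar⟫ := by
      have : ⟪f' (x k), xstar - x k⟫ = -⟪f' (x k), x k - xstar⟫ := by
        rw [← inner_neg_right]; congr 1; abel
      linarith [hgi, this ▸ hgi]
    have h1 : 2 * γl * (f (x k) - f xstar) ≤ 2 * γ k * ⟪f' (x k), x k - xstar⟫ := by
      have a1 : 2 * γl * (f (x k) - f xstar) ≤ 2 * γ k * (f (x k) - f xstar) := by
        nlinarith [hD k]
      have a2 : 2 * γ k * (f (x k) - f xstar) ≤ 2 * γ k * ⟪f' (x k), x k - xstar⟫ := by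
        nlinarith
      linarith
    have h2 : γ k ^ 2 * ‖f' (x k)‖ ^ 2 ≤ γb0 ^ 2 * G ^ 2 / (k+1) := by
      have hs : (0:ℝ) < Real.sqrt (k+1) := Real.sqrt_pos.2 (by positivity)
      have hγsq : γ k ^ 2 ≤ γb0 ^ 2 / (k+1) := by
        have := mul_self_le_mul_self (le_of_lt hγpos) hhi
        have hsq : (Real.sqrt ((k:ℝ)+1)) ^ 2 = (k:ℝ)+1 := Real.sq_sqrt (by positivity)
        rw [div_mul_div_comm] at this
        calc γ k ^ 2 = γ k * γ k := by ring
          _ ≤ γb0 * γb0 / (Real.sqrt ((k:ℝ)+1) * Real.sqrt ((k:ℝ)+1)) := this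
          _ = γb0 ^ 2 / ((k:ℝ)+1) := by
              rw [← sq, ← sq, hsq]
      have hGn : ‖f' (x k)‖ ^ 2 ≤ G ^ 2 := by
        nlinarith [hGbound (x k), norm_nonneg (f' (x k))]
      calc γ k ^ 2 * ‖f' (x k)‖ ^ 2 ≤ (γb0 ^ 2 / (k+1)) * G ^ 2 := by
            apply mul_le_mul hγsq hGn (by positivity) (by positivity)
        _ = γb0 ^ 2 * G ^ 2 / (k+1) := by ring
    nlinarith [h1, h2, hexp]
  -- sum the key inequality
  have hsum : 2 * γl * ∑ k ∈ Finset.range K, (f (x k) - f xstar) ≤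
      ‖x 0 - xstar‖ ^ 2 + γb0 ^ 2 * G ^ 2 * (1 + Real.log K) := by
    have t0 : ∑ k ∈ Finset.range K, (2 * γl * (f (x k) - f xstar)) ≤
        ∑ k ∈ Finset.range K, (‖x k - xstar‖ ^ 2 - ‖x (k+1) - xstar‖ ^ 2 + γb0 ^ 2 * G ^ 2 / (k+1)) :=
      Finset.sum_le_sum (fun k hk => hkey k (Finset.mem_range.1 hk))
    rw [Finset.sum_add_distrib, Finset.sum_range_sub' (fun k => ‖x k - xstar‖ ^ 2) K] at t0
    have t1 : ∑ k ∈ Finset.range K, γb0 ^ 2 * G ^ 2 / ((k:ℝ)+1) ≤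
        γb0 ^ 2 * G ^ 2 * (1 + Real.log K) := by
      have := harmonic_le' K
      calc ∑ k ∈ Finset.range K, γb0 ^ 2 * G ^ 2 / ((k:ℝ)+1)
          = γb0 ^ 2 * G ^ 2 * ∑ k ∈ Finset.range K, (1:ℝ)/((k:ℝ)+1) := by
            rw [Finset.mul_sum]; congr 1; ext k; ring
        _ ≤ γb0 ^ 2 * G ^ 2 * (1 + Real.log K) := by
            apply mul_le_mul_of_nonneg_left this (by positivity)
    rw [← Finset.mul_sum] at t0
    nlinarith [sq_nonneg ‖x K - xstar‖, t0, t1]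
  -- Jensen
  have hjen : f ((K : ℝ)⁻¹ • ∑ k ∈ Finset.range K, x k) ≤
      (K:ℝ)⁻¹ * ∑ k ∈ Finset.range K, f (x k) := by
    have hsm : (K : ℝ)⁻¹ • ∑ k ∈ Finset.range K, x k
        = ∑ k ∈ Finset.range K, (K:ℝ)⁻¹ • x k := Finset.smul_sum
    rw [hsm, Finset.mul_sum]
    exact hconv.map_sum_le (fun i _ => by positivity)
      (by
        rw [Finset.sum_const, Finset.card_range, nsmul_eq_mul]
        field_simp)
      (fun i _ => Set.mem_univ _)
  have hsplit : ∑ k ∈ Finset.range K, (f (x k) - f xstar)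
      = (∑ k ∈ Finset.range K, f (x k)) - K * f xstar := by
    rw [Finset.sum_sub_distrib, Finset.sum_const, Finset.card_range, nsmul_eq_mul]
  have hfinal : f ((K : ℝ)⁻¹ • ∑ k ∈ Finset.range K, x k) - f xstar ≤
      (‖x 0 - xstar‖ ^ 2 + γb0 ^ 2 * G ^ 2 * (1 + Real.log K)) / (2 * γl * K) := by
    have hstep2 : f ((K : ℝ)⁻¹ • ∑ k ∈ Finset.range K, x k) - f xstar ≤
        (K:ℝ)⁻¹ * ∑ k ∈ Finset.range K, (f (x k) - f xstar) := by
      rw [hsplit, mul_sub]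
      have : (K:ℝ)⁻¹ * ((K:ℝ) * f xstar) = f xstar := by field_simp
      rw [this]
      linarith [hjen]
    have hstep3 : (K:ℝ)⁻¹ * ∑ k ∈ Finset.range K, (f (x k) - f xstar) ≤
        (‖x 0 - xstar‖ ^ 2 + γb0 ^ 2 * G ^ 2 * (1 + Real.log K)) / (2 * γl * K) := by
      rw [div_eq_mul_inv, mul_inv]
      have h2γ : (0:ℝ) < 2 * γl := by linarith
      have hq : ∑ k ∈ Finset.range K, (f (x k) - f xstar) ≤
          (‖x 0 - xstar‖ ^ 2 + γb0 ^ 2 * G ^ 2 * (1 + Real.log K)) / (2 * γl) := by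
        rw [le_div_iff₀ h2γ]
        linarith [hsum]
      calc (K:ℝ)⁻¹ * ∑ k ∈ Finset.range K, (f (x k) - f xstar)
          ≤ (K:ℝ)⁻¹ * ((‖x 0 - xstar‖ ^ 2 + γb0 ^ 2 * G ^ 2 * (1 + Real.log K)) / (2 * γl)) := by
            apply mul_le_mul_of_nonneg_left hq (by positivity)
        _ = (‖x 0 - xstar‖ ^ 2 + γb0 ^ 2 * G ^ 2 * (1 + Real.log K)) * ((2*γl)⁻¹ * (K:ℝ)⁻¹) := by
            ring
    linarith
  have hrw : ‖x 0 - xstar‖ ^ 2 / (2 * γl * K) + γb0 ^ 2 * G ^ 2 * (1 + Real.log K) / (2 * γl * K)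
      = (‖x 0 - xstar‖ ^ 2 + γb0 ^ 2 * G ^ 2 * (1 + Real.log K)) / (2 * γl * K) := by
    rw [← add_div]
  rw [hrw]
  exact hfinal
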